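/- Let d, k ≥ 2 and 1 ≤ i ≤ k. For C = (x_1,…,x_k) ∈ A_i set ε(C) = (1/k)·min{ |p(x_r) − p(x_s)| : p(x_r) ≠ p(x_s) } if i ≥ 2 and ε(C) = 1 if i = 1, and define D^i(C,t) = (z_1(C,t),…,z_k(C,t)) with z_j(C,t) = x_j + t(j−1)ε(C)e_1 if i < k, and D^k(C,t) = C. Then D^i : A_i × [0,1] → F(ℝ^d,k) is well defined (collision-free for all t) and continuous, D^i(C,0) = C, and D^i(C,1) ∈ A_k; that is, D^i is a continuous deformation of A_i into A_k inside F(ℝ^d,k). -/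

import Mathlib

set_option maxHeartbeats 1000000

open unitInterval

noncomputable section

/-- Euclidean space ℝ^d. -/
abbrev E (d : ℕ) : Type := EuclideanSpace ℝ (Fin d)

/-- The ordered configuration space F(ℝ^d, k) of k distinct points in ℝ^d,
viewed as the subspace of (ℝ^d)^k of injective tuples. -/
def Conf (d k : ℕ) : Set (Fin k → E d) := {x | Function.Injective x}

/-- The time i/(n-1) ∈ [0,1] at which the i-th configuration is visited. -/
def eTime (n : ℕ) (i : Fin n) : unitInterval :=
  Set.projIcc 0 1 zero_le_one ((i : ℝ) / ((n : ℝ) - 1))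

/-- The evaluation map e_n : P(X) → X^n,
e_n(γ) = (γ(0), γ(1/(n-1)), …, γ((n-2)/(n-1)), γ(1)). -/
def evalMap {X : Type*} [TopologicalSpace X] (n : ℕ) (γ : C(unitInterval, X)) : Fin n → X :=
  fun i => γ (eTime n i)

/-- `A ⊆ X^n` admits a continuous section of the evaluation map e_n. -/
def HasSec {X : Type*} [TopologicalSpace X] (n : ℕ) (A : Set (Fin n → X)) : Prop :=
  ∃ s : A → C(unitInterval, X), Continuous s ∧ ∀ a : A, evalMap n (s a) = (a : Fin n → X)

/-- The first standard basis vector e_1 of ℝ^d. -/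
def e1v (d : ℕ) (hd : 2 ≤ d) : E d := EuclideanSpace.single ⟨0, by omega⟩ (1 : ℝ)

/-- The projection p : ℝ^d → ℝ^d onto the first coordinate axis. -/
def projL {d : ℕ} (x : E d) : E d :=
  (WithLp.equiv 2 (Fin d → ℝ)).symm fun j => if (j : ℕ) = 0 then x j else 0

/-- cp(C) = cardinality of {p(x_1),…,p(x_k)}. -/
def cp {d k : ℕ} (C : Fin k → E d) : ℕ := (Set.range fun i => projL (C i)).ncard

/-- The set A_i of configurations C ∈ F(ℝ^d,k) with cp(C) = i. -/
def Abig (d k i : ℕ) : Set (Fin k → E d) := {C | C ∈ Conf d k ∧ cp C = i}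

/-- ε(C): for cp(C) ≥ 2, (1/k)·min{|p(x_r) - p(x_s)| : p(x_r) ≠ p(x_s)};
for cp(C) = 1, ε(C) = 1. -/
def eps {d k : ℕ} (C : Fin k → E d) : ℝ :=
  if 2 ≤ cp C then
    (1 / (k : ℝ)) *
      sInf {r : ℝ | ∃ a b : Fin k, projL (C a) ≠ projL (C b) ∧ r = ‖projL (C a) - projL (C b)‖}
  else 1

/-- The desingularization D^i: for i < k, D^i(C,t) has components
z_j(C,t) = x_j + t(j-1)ε(C)e_1 (the paper index j ∈ {1,…,k} corresponds to
(j:ℕ)+1 for j : Fin k, so the multiplier j-1 is (j:ℕ)); for i = k, D^k(C,t) = C. -/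
def Ddef {d k : ℕ} (hd : 2 ≤ d) (i : ℕ) (C : Fin k → E d) (t : ℝ) : Fin k → E d :=
  if i < k then fun j => C j + (t * (j : ℝ) * eps C) • e1v d hd else C

namespace Aux

variable {d k : ℕ}

lemma projL_apply (x : E d) (j : Fin d) :
    projL x j = if (j : ℕ) = 0 then x j else 0 := rfl

lemma e1v_apply (hd : 2 ≤ d) (j : Fin d) :
    e1v d hd j = if j = (⟨0, by omega⟩ : Fin d) then (1:ℝ) else 0 := by
  simp [e1v, EuclideanSpace.single_apply]

lemma projL_smul (hd : 2 ≤ d) (x : E d) :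
    projL x = (x ⟨0, by omega⟩) • e1v d hd := by
  ext j
  rw [projL_apply, PiLp.smul_apply, e1v_apply hd, smul_eq_mul]
  by_cases h : (j : ℕ) = 0
  · have hj : j = (⟨0, by omega⟩ : Fin d) := Fin.ext h
    rw [if_pos h, if_pos hj, mul_one]
    exact congrArg x hj
  · have hj : j ≠ (⟨0, by omega⟩ : Fin d) := fun hh => h (by rw [hh])
    rw [if_neg h, if_neg hj, mul_zero]

lemma norm_e1v (hd : 2 ≤ d) : ‖e1v d hd‖ = 1 := by
  simp [e1v, EuclideanSpace.norm_single]

lemma e1v_ne (hd : 2 ≤ d) : e1v d hd ≠ 0 := by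
  intro h
  have := congrFun (congrArg WithLp.ofLp h) (⟨0, by omega⟩ : Fin d)
  rw [e1v_apply hd] at this
  simp at this

lemma proj_eq_iff (hd : 2 ≤ d) (x y : E d) :
    projL x = projL y ↔ x ⟨0, by omega⟩ = y ⟨0, by omega⟩ := by
  constructor
  · intro h
    have := congrFun (congrArg WithLp.ofLp h) (⟨0, by omega⟩ : Fin d)
    rwa [projL_apply, projL_apply, if_pos rfl, if_pos rfl] at this
  · intro h
    rw [projL_smul hd, projL_smul hd, h]

lemma norm_proj_sub (hd : 2 ≤ d) (x y : E d) :
    ‖projL x - projL y‖ = |x ⟨0, by omega⟩ - y ⟨0, by omega⟩| := by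
  rw [projL_smul hd x, projL_smul hd y, ← sub_smul, norm_smul, norm_e1v hd, mul_one,
    Real.norm_eq_abs]

lemma coordD (hd : 2 ≤ d) (x : E d) (c : ℝ) :
    (x + c • e1v d hd) ⟨0, by omega⟩ = x ⟨0, by omega⟩ + c := by
  rw [PiLp.add_apply, PiLp.smul_apply, e1v_apply hd, if_pos rfl, smul_eq_mul, mul_one]

def Pset (C : Fin k → E d) : Finset (Fin k × Fin k) :=
  @Finset.filter _ (fun p => projL (C p.1) ≠ projL (C p.2)) (Classical.decPred _) Finset.univ

lemma mem_Pset {C : Fin k → E d} {p : Fin k × Fin k} :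
    p ∈ Pset C ↔ projL (C p.1) ≠ projL (C p.2) := by
  simp [Pset, Finset.mem_filter]

lemma Sset_eq (C : Fin k → E d) :
    {r : ℝ | ∃ a b : Fin k, projL (C a) ≠ projL (C b) ∧ r = ‖projL (C a) - projL (C b)‖}
      = ↑((Pset C).image fun p => ‖projL (C p.1) - projL (C p.2)‖) := by
  ext r
  simp only [Set.mem_setOf_eq, Finset.coe_image, Set.mem_image, Finset.mem_coe, mem_Pset]
  constructor
  · rintro ⟨a, b, hab, rfl⟩; exact ⟨(a, b), hab, rfl⟩
  · rintro ⟨⟨a, b⟩, hab, rfl⟩; exact ⟨a, b, hab, rfl⟩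

lemma two_le_cp {C : Fin k → E d} {a b : Fin k} (hab : projL (C a) ≠ projL (C b)) :
    2 ≤ cp C := by
  have h : 1 < (Set.range fun i => projL (C i)).ncard :=
    (Set.one_lt_ncard (Set.finite_range _)).2 ⟨_, ⟨a, rfl⟩, _, ⟨b, rfl⟩, hab⟩
  unfold cp
  omega

lemma Pset_nonempty {C : Fin k → E d} (h2 : 2 ≤ cp C) : (Pset C).Nonempty := by
  unfold cp at h2
  have h1 : 1 < (Set.range fun i => projL (C i)).ncard := by omega
  obtain ⟨x, hx, y, hy, hxy⟩ := (Set.one_lt_ncard (Set.finite_range _)).1 h1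
  obtain ⟨a, rfl⟩ := hx; obtain ⟨b, rfl⟩ := hy
  exact ⟨(a, b), mem_Pset.2 hxy⟩

lemma eps_eq {C : Fin k → E d} (h2 : 2 ≤ cp C) :
    eps C = (1/(k:ℝ)) *
      (Pset C).inf' (Pset_nonempty h2) (fun p => ‖projL (C p.1) - projL (C p.2)‖) := by
  rw [eps, if_pos h2]
  rw [Sset_eq]
  rw [Finset.coe_image]
  rw [← Finset.inf'_eq_csInf_image _ (Pset_nonempty h2)]

lemma eps_pos (hk : 0 < k) (C : Fin k → E d) : 0 < eps C := by
  by_cases h2 : 2 ≤ cp C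
  · rw [eps_eq h2]
    have hk' : (0:ℝ) < k := by exact_mod_cast hk
    refine mul_pos (by positivity) ?_
    refine (Finset.lt_inf'_iff _).2 fun p hp => ?_
    exact norm_pos_iff.2 (sub_ne_zero.2 (mem_Pset.1 hp))
  · rw [eps, if_neg h2]; exact one_pos

lemma k_eps_le (hk : 0 < k) {C : Fin k → E d} {a b : Fin k}
    (hab : projL (C a) ≠ projL (C b)) :
    (k:ℝ) * eps C ≤ ‖projL (C a) - projL (C b)‖ := by
  have h2 := two_le_cp hab
  rw [eps_eq h2]
  have hk' : (k:ℝ) ≠ 0 := Nat.cast_ne_zero.2 hk.ne'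
  have harr : ∀ x : ℝ, (k:ℝ) * (1/(k:ℝ) * x) = x := fun x => by field_simp
  rw [harr]
  exact Finset.inf'_le (b := (a, b)) _ (mem_Pset.2 hab)

lemma real_key (hk : 2 ≤ k) {u u' ε t : ℝ} {j j' : Fin k}
    (ht0 : 0 ≤ t) (ht1 : t ≤ 1) (hε : 0 < ε)
    (hlb : u ≠ u' → (k:ℝ) * ε ≤ |u - u'|)
    (h : u + t * (j:ℝ) * ε = u' + t * (j':ℝ) * ε) :
    u = u' ∧ t * (j:ℝ) * ε = t * (j':ℝ) * ε := by
  by_cases hg : u = u'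
  · exact ⟨hg, by linarith⟩
  · exfalso
    have hb := hlb hg
    have hj : ((j:ℕ):ℝ) + 1 ≤ (k:ℝ) := by exact_mod_cast j.isLt
    have hj' : ((j':ℕ):ℝ) + 1 ≤ (k:ℝ) := by exact_mod_cast j'.isLt
    have hj0 : (0:ℝ) ≤ (j:ℕ) := Nat.cast_nonneg _
    have hj0' : (0:ℝ) ≤ (j':ℕ) := Nat.cast_nonneg _
    have habs : |u - u'| = |t * ((j':ℝ) - (j:ℝ))| * ε := by
      have e : u - u' = t * ((j':ℝ) - (j:ℝ)) * ε := by linarith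
      rw [e, abs_mul, abs_of_pos hε]
    have hbd : |t * ((j':ℝ) - (j:ℝ))| ≤ (k:ℝ) - 1 := by
      rw [abs_mul]
      have h1 : |t| ≤ 1 := abs_le.2 ⟨by linarith, ht1⟩
      have h2 : |(j':ℝ) - (j:ℝ)| ≤ (k:ℝ) - 1 := abs_le.2 ⟨by linarith, by linarith⟩
      calc |t| * |(j':ℝ) - (j:ℝ)| ≤ 1 * ((k:ℝ) - 1) :=
            mul_le_mul h1 h2 (abs_nonneg _) zero_le_one
        _ = (k:ℝ) - 1 := one_mul _
    have := mul_le_mul_of_nonneg_right hbd hε.le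
    rw [habs] at hb
    nlinarith

lemma D_inj (hd : 2 ≤ d) (hk : 2 ≤ k) {i : ℕ} {C : Fin k → E d} (hC : C ∈ Abig d k i)
    {t : ℝ} (ht0 : 0 ≤ t) (ht1 : t ≤ 1) :
    Function.Injective (fun j : Fin k => C j + (t * (j:ℝ) * eps C) • e1v d hd) := by
  intro j j' hjj'
  simp only at hjj'
  have hu : C j ⟨0, by omega⟩ + t * (j:ℝ) * eps C
      = C j' ⟨0, by omega⟩ + t * (j':ℝ) * eps C := by
    have h0 := congrFun (congrArg WithLp.ofLp hjj') (⟨0, by omega⟩ : Fin d)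
    rwa [coordD hd, coordD hd] at h0
  have hlb : C j ⟨0, by omega⟩ ≠ C j' ⟨0, by omega⟩ →
      (k:ℝ) * eps C ≤ |C j ⟨0, by omega⟩ - C j' ⟨0, by omega⟩| := by
    intro hne
    have hproj : projL (C j) ≠ projL (C j') := fun he => hne ((proj_eq_iff hd _ _).1 he)
    have := k_eps_le (by omega) hproj
    rwa [norm_proj_sub hd] at this
  obtain ⟨-, hc⟩ := real_key hk ht0 ht1 (eps_pos (by omega) C) hlb hu
  rw [hc] at hjj'
  exact hC.1 (add_right_cancel hjj')

lemma projD_inj (hd : 2 ≤ d) (hk : 2 ≤ k) {i : ℕ} {C : Fin k → E d} (hC : C ∈ Abig d k i) :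
    Function.Injective (fun j : Fin k =>
      projL (C j + ((1:ℝ) * (j:ℝ) * eps C) • e1v d hd)) := by
  intro j j' h
  simp only at h
  have hε : 0 < eps C := eps_pos (by omega) C
  have hu : C j ⟨0, by omega⟩ + 1 * (j:ℝ) * eps C
      = C j' ⟨0, by omega⟩ + 1 * (j':ℝ) * eps C := by
    have h0 := (proj_eq_iff hd _ _).1 h
    rwa [coordD hd, coordD hd] at h0
  have hlb : C j ⟨0, by omega⟩ ≠ C j' ⟨0, by omega⟩ →
      (k:ℝ) * eps C ≤ |C j ⟨0, by omega⟩ - C j' ⟨0, by omega⟩| := by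
    intro hne
    have hproj : projL (C j) ≠ projL (C j') := fun he => hne ((proj_eq_iff hd _ _).1 he)
    have := k_eps_le (by omega) hproj
    rwa [norm_proj_sub hd] at this
  obtain ⟨-, hc⟩ := real_key hk zero_le_one le_rfl hε hlb hu
  have : (j:ℝ) = (j':ℝ) := by
    rw [one_mul, one_mul] at hc
    exact mul_right_cancel₀ hε.ne' hc
  exact Fin.ext (by exact_mod_cast this)

lemma cp_card [DecidableEq (E d)] (C : Fin k → E d) :
    cp C = (Finset.image (fun a => projL (C a)) Finset.univ).card := by
  rw [cp]
  rw [← Set.ncard_coe_finset]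
  rw [Finset.coe_image]
  rw [Finset.coe_univ]
  rw [Set.image_univ]

lemma eps_cont (hd : 2 ≤ d) (hk : 2 ≤ k) (i : ℕ) (h2i : 2 ≤ i) :
    Continuous (fun C : ↥(Abig d k i) => eps (C : Fin k → E d)) := by
  classical
  rw [continuous_iff_continuousAt]
  intro C₀
  have h2₀ : 2 ≤ cp (C₀ : Fin k → E d) := by rw [C₀.2.2]; exact h2i
  have hne : (Pset (C₀ : Fin k → E d)).Nonempty := Pset_nonempty h2₀
  set P₀ := Pset (C₀ : Fin k → E d) with hP₀
  set F : ↥(Abig d k i) → (Fin k × Fin k) → ℝ :=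
    fun C p => ‖projL ((C : Fin k → E d) p.1) - projL ((C : Fin k → E d) p.2)‖ with hF
  have hprojc : Continuous (projL : E d → E d) := by
    have : (projL : E d → E d) = fun x => (x ⟨0, by omega⟩) • e1v d hd :=
      funext (projL_smul hd)
    rw [this]
    exact ((continuous_apply _).comp (PiLp.continuous_ofLp 2 _)).smul continuous_const
  have hcontF : ∀ p : Fin k × Fin k, Continuous (fun C => F C p) := by
    intro p
    exact ((hprojc.comp ((continuous_apply p.1).comp continuous_subtype_val)).sub
      (hprojc.comp ((continuous_apply p.2).comp continuous_subtype_val))).norm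
  have hGcont : Continuous (fun C : ↥(Abig d k i) => (1/(k:ℝ)) * P₀.inf' hne (F C)) :=
    continuous_const.mul (Continuous.finset_inf'_apply hne fun p _ => hcontF p)
  set m := P₀.inf' hne (F C₀) with hm_def
  have hm : 0 < m := by
    refine (Finset.lt_inf'_iff _).2 fun p hp => ?_
    exact norm_pos_iff.2 (sub_ne_zero.2 (mem_Pset.1 hp))
  have hev : ∀ᶠ C : ↥(Abig d k i) in nhds C₀, ∀ a : Fin k,
      ‖projL ((C : Fin k → E d) a) - projL ((C₀ : Fin k → E d) a)‖ < m / 3 := by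
    rw [Filter.eventually_all]
    intro a
    have hc : Continuous fun C : ↥(Abig d k i) =>
        ‖projL ((C : Fin k → E d) a) - projL ((C₀ : Fin k → E d) a)‖ :=
      ((hprojc.comp ((continuous_apply a).comp continuous_subtype_val)).sub
        continuous_const).norm
    have ht := hc.tendsto C₀
    rw [sub_self, norm_zero] at ht
    exact ht.eventually_lt_const (by positivity)
  refine ContinuousAt.congr hGcont.continuousAt ?_
  refine hev.mono fun C hclose => ?_
  -- show (1/k) * P₀.inf' hne (F C) = eps C
  have h2C : 2 ≤ cp (C : Fin k → E d) := by rw [C.2.2]; exact h2i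
  -- pattern: equal projections pattern coincides
  have hone : ∀ a b : Fin k, projL ((C₀ : Fin k → E d) a) ≠ projL ((C₀ : Fin k → E d) b) →
      projL ((C : Fin k → E d) a) ≠ projL ((C : Fin k → E d) b) := by
    intro a b hab hcab
    have h1 : m ≤ ‖projL ((C₀ : Fin k → E d) a) - projL ((C₀ : Fin k → E d) b)‖ :=
      Finset.inf'_le (b := (a, b)) _ (mem_Pset.2 hab)
    have e : projL ((C₀ : Fin k → E d) a) - projL ((C₀ : Fin k → E d) b)
        = (projL ((C₀ : Fin k → E d) a) - projL ((C : Fin k → E d) a))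
          + (projL ((C : Fin k → E d) b) - projL ((C₀ : Fin k → E d) b)) := by
      rw [hcab]; abel
    have h2 : ‖projL ((C₀ : Fin k → E d) a) - projL ((C₀ : Fin k → E d) b)‖
        ≤ ‖projL ((C₀ : Fin k → E d) a) - projL ((C : Fin k → E d) a)‖
          + ‖projL ((C : Fin k → E d) b) - projL ((C₀ : Fin k → E d) b)‖ := by
      rw [e]; exact norm_add_le _ _
    have h3 := hclose a
    have h4 := hclose b
    rw [norm_sub_rev] at h3
    linarith
  have honec : ∀ a b : Fin k, projL ((C : Fin k → E d) a) = projL ((C : Fin k → E d) b) →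
      projL ((C₀ : Fin k → E d) a) = projL ((C₀ : Fin k → E d) b) := by
    intro a b hab
    by_contra hne
    exact hone a b hne hab
  -- cardinality argument for converse
  have htwo : ∀ a b : Fin k, projL ((C₀ : Fin k → E d) a) = projL ((C₀ : Fin k → E d) b) →
      projL ((C : Fin k → E d) a) = projL ((C : Fin k → E d) b) := by
    set u : Fin k → E d := fun a => projL ((C : Fin k → E d) a) with hu
    set u₀ : Fin k → E d := fun a => projL ((C₀ : Fin k → E d) a) with hu₀
    set T : Finset (E d) := Finset.image u Finset.univ with hT
    set T₀ : Finset (E d) := Finset.image u₀ Finset.univ with hT₀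
    have hcT : T.card = i := by
      have := cp_card (C : Fin k → E d)
      rw [C.2.2] at this
      rw [hT]; convert this.symm using 2
    have hcT₀ : T₀.card = i := by
      have := cp_card (C₀ : Fin k → E d)
      rw [C₀.2.2] at this
      rw [hT₀]; convert this.symm using 2
    haveI : Nonempty (Fin k) := ⟨⟨0, by omega⟩⟩
    set sfn : E d → Fin k := fun v => Function.invFunOn u Set.univ v with hsfn_def
    have hsfn : ∀ a : Fin k, u (sfn (u a)) = u a := by
      intro a
      exact Function.invFunOn_eq ⟨a, Set.mem_univ a, rfl⟩
    set φ : E d → E d := fun v => u₀ (sfn v) with hφ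
    have hφval : ∀ a : Fin k, φ (u a) = u₀ a := by
      intro a
      exact honec _ _ (hsfn a)
    have himg : T.image φ = T₀ := by
      apply Finset.Subset.antisymm
      · intro w hw
        obtain ⟨v, hv, rfl⟩ := Finset.mem_image.1 hw
        obtain ⟨a, -, rfl⟩ := Finset.mem_image.1 hv
        rw [hφval a]
        exact Finset.mem_image_of_mem _ (Finset.mem_univ a)
      · intro w hw
        obtain ⟨a, -, rfl⟩ := Finset.mem_image.1 hw
        refine Finset.mem_image.2 ⟨u a, Finset.mem_image_of_mem _ (Finset.mem_univ a), ?_⟩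
        exact hφval a
    have hinj : Set.InjOn φ ↑T :=
      Finset.injOn_of_card_image_eq (by rw [himg, hcT₀, hcT])
    intro a b hab
    have ha : u a ∈ T := Finset.mem_image_of_mem _ (Finset.mem_univ a)
    have hb : u b ∈ T := Finset.mem_image_of_mem _ (Finset.mem_univ b)
    refine hinj ha hb ?_
    calc φ (u a) = u₀ a := hφval a
      _ = u₀ b := hab
      _ = φ (u b) := (hφval b).symm
  have hPeq : Pset ((C : Fin k → E d)) = P₀ := by
    apply Finset.ext
    intro p
    rw [mem_Pset, hP₀, mem_Pset]
    constructor
    · intro h hh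
      exact h (htwo _ _ hh)
    · intro h
      exact hone _ _ h
  show (1/(k:ℝ)) * P₀.inf' hne (F C) = eps (C : Fin k → E d)
  rw [eps_eq h2C]
  congr 1
  exact Finset.inf'_congr hne hPeq.symm (fun p _ => rfl)

end Aux

/-- For d, k ≥ 2 and 1 ≤ i ≤ k, D^i : A_i × [0,1] → F(ℝ^d,k) is
well defined (collision-free for all t), continuous, D^i(C,0) = C and
D^i(C,1) ∈ A_k: a continuous deformation of A_i into A_k inside F(ℝ^d,k). -/
theorem stmt7 (d k i : ℕ) (hd : 2 ≤ d) (hk : 2 ≤ k) (hi1 : 1 ≤ i) (hik : i ≤ k) :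
    (∀ C ∈ Abig d k i, ∀ t ∈ Set.Icc (0 : ℝ) 1, Ddef hd i C t ∈ Conf d k) ∧
    Continuous (fun p : ↥(Abig d k i) × unitInterval =>
      Ddef hd i ((p.1 : Fin k → E d)) ((p.2 : ℝ))) ∧
    (∀ C ∈ Abig d k i, Ddef hd i C 0 = C) ∧
    (∀ C ∈ Abig d k i, Ddef hd i C 1 ∈ Abig d k k) := by
  refine ⟨?_, ?_, ?_, ?_⟩
  · -- well-defined
    intro C hC t ht
    by_cases hik' : i < k
    · rw [Ddef, if_pos hik']
      exact Aux.D_inj hd hk hC ht.1 ht.2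
    · rw [Ddef, if_neg hik']
      exact hC.1
  · -- continuity
    by_cases hik' : i < k
    · simp only [Ddef, if_pos hik']
      refine continuous_pi fun j => Continuous.add ?_ ?_
      · exact (continuous_apply j).comp (continuous_subtype_val.comp continuous_fst)
      · have hepsc : Continuous (fun C : ↥(Abig d k i) => eps (C : Fin k → E d)) := by
          by_cases h2i : 2 ≤ i
          · exact Aux.eps_cont hd hk i h2i
          · have hval : ∀ C : ↥(Abig d k i), eps (C : Fin k → E d) = 1 := by
              intro C
              rw [eps, if_neg]
              rw [C.2.2]
              omega
            exact continuous_const.congr fun C => (hval C).symm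
        exact (((continuous_subtype_val.comp continuous_snd).mul continuous_const).mul
          (hepsc.comp continuous_fst)).smul continuous_const
    · simp only [Ddef, if_neg hik']
      exact continuous_subtype_val.comp continuous_fst
  · -- t = 0
    intro C hC
    by_cases hik' : i < k
    · rw [Ddef, if_pos hik']
      funext j
      simp
    · rw [Ddef, if_neg hik']
  · -- t = 1 lands in A_k
    intro C hC
    by_cases hik' : i < k
    · rw [Ddef, if_pos hik']
      refine ⟨Aux.D_inj hd hk hC zero_le_one le_rfl, ?_⟩
      have hpinj := Aux.projD_inj hd hk hC
      show (Set.range fun j : Fin k =>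
        projL (C j + ((1:ℝ) * (j:ℝ) * eps C) • e1v d hd)).ncard = k
      rw [← Set.image_univ, Set.ncard_image_of_injective _ hpinj, Set.ncard_univ,
        Nat.card_eq_fintype_card, Fintype.card_fin]
    · have hik'' : i = k := by omega
      rw [Ddef, if_neg hik']
      exact hik'' ▸ hC
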